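/- Let n' ≥ 32 be an integer, let A' = { x ∈ F_2^{n'} : the number of coordinates of x equal to 1 is at least n'/2 }, and let r ∈ F_2^{n'} have Hamming weight 1. Then |Â'(r)| = Σ_{s=⌈n'/2⌉}^{n'} ((2s−n')/n') · C(n',s) ≥ 2^{−14} · 2^{n'}/√{n'}, where C(n',s) is the binomial coefficient. -/

import Mathlib

open Finset

lemma zmod2_cases (a : ZMod 2) : a = 0 ∨ a = 1 := by revert a; decide

lemma sixteen_pow_le (k : ℕ) (hk : 1 ≤ k) : 16 ^ k ≤ 4 * k * (Nat.centralBinom k) ^ 2 := by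
  induction k with
  | zero => omega
  | succ k ih =>
    rcases Nat.eq_or_lt_of_le hk with h | h
    · simp [← h, Nat.centralBinom]
    · have hk1 : 1 ≤ k := by omega
      have IH := ih hk1
      have key : (k + 1) * Nat.centralBinom (k + 1) = 2 * (2 * k + 1) * Nat.centralBinom k :=
        Nat.succ_mul_centralBinom_succ k
      have hmul : 16 ^ (k + 1) * (k + 1) ^ 2 ≤ 4 * (k + 1) ^ 2 * (k+1) * Nat.centralBinom (k+1) ^ 2 := by
        have h1 : ((k+1) * Nat.centralBinom (k+1))^2 = (2 * (2*k+1) * Nat.centralBinom k)^2 := by rw [key]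
        have h2 : 4*(k+1)*((k+1) * Nat.centralBinom (k+1))^2 = 4 * (k + 1) ^ 2 * (k+1) * Nat.centralBinom (k+1) ^ 2 := by ring
        have h3 : 16 ^ (k+1) * (k+1)^2 ≤ 4*(k+1)*(2 * (2*k+1) * Nat.centralBinom k)^2 := by
          have : 16 ^ (k+1) * (k+1)^2 = 16 * (k+1)^2 * 16^k := by ring
          rw [this]
          calc 16 * (k+1)^2 * 16^k ≤ 16 * (k+1)^2 * (4 * k * (Nat.centralBinom k)^2) :=
                Nat.mul_le_mul_left _ IH
            _ = (4 * k * (k+1)) * (16 * (k+1) * (Nat.centralBinom k)^2) := by ring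
            _ ≤ ((2*k+1)^2) * (16 * (k+1) * (Nat.centralBinom k)^2) := by
                apply Nat.mul_le_mul_right; nlinarith
            _ = 4*(k+1)*(2 * (2*k+1) * Nat.centralBinom k)^2 := by ring
        calc 16 ^ (k + 1) * (k + 1) ^ 2 ≤ 4*(k+1)*(2 * (2*k+1) * Nat.centralBinom k)^2 := h3
          _ = 4*(k+1)*((k+1) * Nat.centralBinom (k+1))^2 := by rw [h1]
          _ = _ := h2
      have hpos : 0 < (k+1)^2 := by positivity
      calc 16 ^ (k+1) = 16 ^ (k+1) * (k+1)^2 / (k+1)^2 := by rw [Nat.mul_div_cancel _ hpos]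
        _ ≤ 4 * (k + 1) ^ 2 * (k+1) * Nat.centralBinom (k+1) ^ 2 / (k+1)^2 := Nat.div_le_div_right hmul
        _ = 4 * (k+1) * Nat.centralBinom (k+1) ^ 2 := by
            rw [show 4 * (k + 1) ^ 2 * (k+1) * Nat.centralBinom (k+1) ^ 2
              = (4 * (k+1) * Nat.centralBinom (k+1) ^ 2) * (k+1)^2 by ring,
              Nat.mul_div_cancel _ hpos]

lemma centralBinom_real_lb (k : ℕ) (hk : 1 ≤ k) :
    (4 : ℝ) ^ k ≤ 2 * Real.sqrt k * Nat.centralBinom k := by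
  have h := sixteen_pow_le k hk
  have hR : ((4:ℝ)^k)^2 ≤ (2 * Real.sqrt k * Nat.centralBinom k)^2 := by
    have hsq : (Real.sqrt k)^2 = (k:ℝ) := Real.sq_sqrt (by positivity)
    have : (2 * Real.sqrt k * Nat.centralBinom k)^2 = 4 * k * (Nat.centralBinom k:ℝ)^2 := by
      rw [mul_pow, mul_pow, hsq]; ring
    rw [this, show ((4:ℝ)^k)^2 = 16^k by rw [← pow_mul, pow_mul']; norm_num]
    calc (16:ℝ)^k = ((16^k : ℕ) : ℝ) := by push_cast; ring
      _ ≤ ((4 * k * (Nat.centralBinom k) ^ 2 : ℕ) : ℝ) := by exact_mod_cast h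
      _ = 4 * k * (Nat.centralBinom k:ℝ)^2 := by push_cast; ring
  have h1 : (0:ℝ) ≤ 4^k := by positivity
  have h2 : (0:ℝ) ≤ 2 * Real.sqrt k * Nat.centralBinom k := by positivity
  nlinarith

lemma sum_sign_sets (n m : ℕ) (hm : 1 ≤ m) (j : Fin n) :
    ∑ S ∈ (univ : Finset (Finset (Fin n))).filter (fun S => m ≤ S.card),
      (if j ∈ S then (-1:ℝ) else 1) = -(((n-1).choose (m-1) : ℕ) : ℝ) := by
  set B : Finset (Finset (Fin n)) := univ.filter (fun S => m ≤ S.card) with hB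
  have hsplit := Finset.sum_filter_add_sum_filter_not B (fun S => j ∈ S)
      (fun S => if j ∈ S then (-1:ℝ) else 1)
  have h1 : ∑ S ∈ B.filter (fun S => j ∈ S), (if j ∈ S then (-1:ℝ) else 1)
      = -((B.filter (fun S => j ∈ S)).card : ℝ) := by
    rw [Finset.sum_congr rfl (fun S hS => if_pos (Finset.mem_filter.mp hS).2)]
    simp [Finset.sum_const]
  have h0 : ∑ S ∈ B.filter (fun S => ¬ j ∈ S), (if j ∈ S then (-1:ℝ) else 1)
      = ((B.filter (fun S => ¬ j ∈ S)).card : ℝ) := by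
    rw [Finset.sum_congr rfl (fun S hS => if_neg (Finset.mem_filter.mp hS).2)]
    simp
  have hcard : (B.filter (fun S => j ∈ S)).card
      = (B.filter (fun S => ¬ j ∈ S)).card + (n-1).choose (m-1) := by
    have hbij : (B.filter (fun S => j ∈ S)).card
        = ((univ : Finset (Finset (Fin n))).filter (fun T => j ∉ T ∧ m - 1 ≤ T.card)).card := by
      refine Finset.card_bij' (fun S _ => S.erase j) (fun T _ => insert j T) ?_ ?_ ?_ ?_
      · intro S hS
        simp only [hB, Finset.mem_filter, Finset.mem_univ, true_and] at hS ⊢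
        obtain ⟨hmS, hjS⟩ := hS
        refine ⟨Finset.notMem_erase _ _, ?_⟩
        rw [Finset.card_erase_of_mem hjS]; omega
      · intro T hT
        simp only [hB, Finset.mem_filter, Finset.mem_univ, true_and] at hT ⊢
        obtain ⟨hjT, hmT⟩ := hT
        refine ⟨?_, Finset.mem_insert_self _ _⟩
        rw [Finset.card_insert_of_notMem hjT]; omega
      · intro S hS
        simp only [hB, Finset.mem_filter, Finset.mem_univ, true_and] at hS
        exact Finset.insert_erase hS.2
      · intro T hT
        simp only [Finset.mem_filter, Finset.mem_univ, true_and] at hT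
        exact Finset.erase_insert hT.1
    rw [hbij]
    have hsplit2 : (univ : Finset (Finset (Fin n))).filter (fun T => j ∉ T ∧ m - 1 ≤ T.card)
        = (univ : Finset (Finset (Fin n))).filter (fun T => j ∉ T ∧ m ≤ T.card)
          ∪ (univ : Finset (Finset (Fin n))).filter (fun T => j ∉ T ∧ T.card = m - 1) := by
      ext T
      simp only [Finset.mem_filter, Finset.mem_union, Finset.mem_univ, true_and]
      constructor
      · rintro ⟨h1, h2⟩
        rcases Nat.lt_or_ge (T.card) m with h | h
        · right; exact ⟨h1, by omega⟩
        · left; exact ⟨h1, h⟩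
      · rintro (⟨h1, h2⟩ | ⟨h1, h2⟩) <;> exact ⟨h1, by omega⟩
    rw [hsplit2, Finset.card_union_of_disjoint]
    · congr 1
      · congr 1
        ext T
        simp only [hB, Finset.mem_filter, Finset.mem_univ, true_and]
        tauto
      · have : (univ : Finset (Finset (Fin n))).filter (fun T => j ∉ T ∧ T.card = m - 1)
            = Finset.powersetCard (m-1) ((univ : Finset (Fin n)).erase j) := by
          ext T
          simp only [Finset.mem_filter, Finset.mem_univ, true_and, Finset.mem_powersetCard,
            Finset.subset_erase, Finset.subset_univ, true_and]
          try tauto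
        rw [this, Finset.card_powersetCard, Finset.card_erase_of_mem (Finset.mem_univ j),
          Finset.card_univ, Fintype.card_fin]
    · rw [Finset.disjoint_filter]
      rintro T _ ⟨h1, h2⟩ ⟨h3, h4⟩
      omega
  rw [← hsplit, h1, h0, hcard]
  push_cast
  ring

lemma rhs_sum (n m : ℕ) (h1 : 1 ≤ m) (hmn : m ≤ n) :
    ∑ s ∈ Finset.Icc m n, ((2 * (s:ℝ) - n)/n) * (n.choose s : ℝ)
      = (((n-1).choose (m-1) : ℕ) : ℝ) := by
  have hn : 1 ≤ n := le_trans h1 hmn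
  have hterm : ∀ s ∈ Finset.Icc m n,
      ((2 * (s:ℝ) - n)/n) * (n.choose s : ℝ)
        = ((n-1).choose (s-1) : ℝ) - ((n-1).choose s : ℝ) := by
    intro s hs
    rw [Finset.mem_Icc] at hs
    have hs1 : 1 ≤ s := le_trans h1 hs.1
    have e1 : n * (n-1).choose (s-1) = n.choose s * s := by
      have h5 := Nat.add_one_mul_choose_eq (n-1) (s-1)
      rwa [Nat.sub_add_cancel hn, Nat.sub_add_cancel hs1] at h5
    have e2 : n * (n-1).choose s = n.choose s * (n - s) := by
      have h3 := Nat.choose_succ_right_eq n s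
      have h4 := Nat.add_one_mul_choose_eq (n-1) s
      rw [Nat.sub_add_cancel hn] at h4
      rw [h4, h3]
    have hnR : (n:ℝ) ≠ 0 := by positivity
    have e1R : (n:ℝ) * ((n-1).choose (s-1) : ℝ) = (n.choose s : ℝ) * s := by exact_mod_cast e1
    have e2R : (n:ℝ) * ((n-1).choose s : ℝ) = (n.choose s : ℝ) * ((n:ℝ) - s) := by
      have : ((n - s : ℕ) : ℝ) = (n:ℝ) - s := by
        rw [Nat.cast_sub hs.2]
      rw [← this]; exact_mod_cast e2
    field_simp
    nlinarith [e1R, e2R]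
  rw [Finset.sum_congr rfl hterm]
  have : Finset.Icc m n = Finset.Ico m (n+1) := by rw [Finset.Ico_add_one_right_eq_Icc]
  rw [this, Finset.sum_Ico_eq_sum_range]
  have hre : ∀ i ∈ Finset.range (n + 1 - m),
      (((n-1).choose (m + i - 1) : ℝ) - ((n-1).choose (m + i) : ℝ))
      = (fun t => ((n-1).choose (m - 1 + t) : ℝ)) i - (fun t => ((n-1).choose (m - 1 + t) : ℝ)) (i+1) := by
    intro i _
    simp only
    congr 3 <;> omega
  rw [Finset.sum_congr rfl hre, Finset.sum_range_sub']
  rw [show m - 1 + 0 = m - 1 by omega, show m - 1 + (n + 1 - m) = n by omega]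
  have hz : (n-1).choose n = 0 := Nat.choose_eq_zero_of_lt (by omega)
  rw [hz]
  norm_num

lemma lb_main (n m : ℕ) (hn : 32 ≤ n) (hm : m = (n+1)/2) :
    (2 : ℝ) ^ (-14 : ℤ) * 2 ^ n / Real.sqrt n ≤ (((n-1).choose (m-1) : ℕ) : ℝ) := by
  have h214 : (2:ℝ) ^ (-14:ℤ) = 1/16384 := by norm_num
  have htpos : (0:ℝ) < Real.sqrt n := Real.sqrt_pos.mpr (by positivity)
  rcases Nat.even_or_odd n with ⟨K, hK⟩ | ⟨K, hK⟩
  · have hK16 : 16 ≤ K := by omega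
    have hm' : m - 1 = K - 1 := by omega
    have hcb : 2 * ((n-1).choose (m-1)) = Nat.centralBinom K := by
      rw [hm', Nat.centralBinom]
      have e1 : 2 * K = (2*K - 1) + 1 := by omega
      have e2 : K = (K - 1) + 1 := by omega
      rw [show (2*K).choose K = ((2*K-1)+1).choose ((K-1)+1) by rw [← e1, ← e2],
        Nat.choose_succ_succ]
      have e3 : (2*K-1).choose ((K-1)+1) = (2*K-1).choose (K-1) := by
        rw [show (K-1)+1 = K by omega, ← Nat.choose_symm (by omega : K ≤ 2*K-1),
          show 2*K-1-K = K-1 by omega]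
      rw [e3, show n - 1 = 2*K-1 by omega]
      ring
    have hlb := centralBinom_real_lb K (by omega)
    have hsle : Real.sqrt K ≤ Real.sqrt n := Real.sqrt_le_sqrt (by exact_mod_cast Nat.cast_le.mpr (by omega))
    have hspos : (0:ℝ) < Real.sqrt K := Real.sqrt_pos.mpr (by positivity)
    have hcbR : (Nat.centralBinom K : ℝ) = 2 * ((n-1).choose (m-1) : ℝ) := by
      exact_mod_cast (hcb.symm)
    rw [h214, div_le_iff₀ htpos]
    have h2n : (2:ℝ)^n = 4^K := by
      rw [hK, show K + K = 2*K by ring, pow_mul]; norm_num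
    rw [h2n]
    set c : ℝ := (((n-1).choose (m-1) : ℕ) : ℝ) with hc
    have hcnn : (0:ℝ) ≤ c := by positivity
    rw [hcbR] at hlb
    have h4pos : (0:ℝ) < 4^K := by positivity
    nlinarith [mul_le_mul_of_nonneg_right hsle hcnn, hlb, h4pos]
  · have hK16 : 16 ≤ K := by omega
    have hm1 : m - 1 = K := by omega
    have hn1 : n - 1 = 2 * K := by omega
    have hcb : ((n-1).choose (m-1)) = Nat.centralBinom K := by
      rw [hm1, hn1, Nat.centralBinom]
    have hlb := centralBinom_real_lb K (by omega)
    have hsle : Real.sqrt K ≤ Real.sqrt n := Real.sqrt_le_sqrt (by exact_mod_cast Nat.cast_le.mpr (by omega))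
    have hspos : (0:ℝ) < Real.sqrt K := Real.sqrt_pos.mpr (by positivity)
    rw [h214, div_le_iff₀ htpos]
    have h2n : (2:ℝ)^n = 2 * 4^K := by
      rw [hK, show 2*K + 1 = (2*K) + 1 by ring, pow_succ, pow_mul]; norm_num; ring
    rw [h2n, hcb]
    set c : ℝ := ((Nat.centralBinom K : ℕ) : ℝ) with hc
    have hcnn : (0:ℝ) ≤ c := by positivity
    have h4pos : (0:ℝ) < 4^K := by positivity
    nlinarith [mul_le_mul_of_nonneg_right hsle hcnn, hlb, h4pos]

/-- The Fourier transform of (the indicator of) `A ⊆ F_2^{n'}`: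
`Â(r) = ∑_{x ∈ A} (−1)^{⟨r,x⟩}`. -/
def fourierF2 {n : ℕ} (A : Finset (Fin n → ZMod 2)) (r : Fin n → ZMod 2) : ℝ :=
  ∑ x ∈ A, (-1 : ℝ) ^ (∑ i, r i * x i : ZMod 2).val

theorem stmt7 {n' : ℕ} (hn' : 32 ≤ n')
    (A' : Finset (Fin n' → ZMod 2))
    (hA' : A' = Finset.univ.filter fun x : Fin n' → ZMod 2 =>
      (n' : ℝ) / 2 ≤ ((Finset.univ.filter fun i => x i = 1).card : ℝ))
    (r : Fin n' → ZMod 2)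
    (hr : (Finset.univ.filter fun i => r i = 1).card = 1) :
    |fourierF2 A' r| =
        ∑ s ∈ Finset.Icc ⌈(n' : ℝ) / 2⌉₊ n',
          ((2 * (s : ℝ) - n') / n') * (n'.choose s : ℝ) ∧
      (2 : ℝ) ^ (-14 : ℤ) * 2 ^ n' / Real.sqrt n' ≤
        ∑ s ∈ Finset.Icc ⌈(n' : ℝ) / 2⌉₊ n',
          ((2 * (s : ℝ) - n') / n') * (n'.choose s : ℝ) := by
  set m : ℕ := ⌈(n' : ℝ) / 2⌉₊ with hmdef
  -- m = (n'+1)/2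
  have hm2 : m = (n' + 1) / 2 := by
    have hq1 : ((n' : ℝ)) / 2 ≤ (((n'+1)/2 : ℕ) : ℝ) := by
      rw [div_le_iff₀ (by norm_num : (0:ℝ) < 2)]
      have : (n' : ℝ) ≤ 2 * (((n'+1)/2 : ℕ) : ℕ) := by
        exact_mod_cast Nat.cast_le.mpr (by omega : n' ≤ 2 * ((n'+1)/2))
      linarith [this]
    have hub : m ≤ (n'+1)/2 := Nat.ceil_le.mpr hq1
    have hlb : (n'+1)/2 - 1 < m := by
      rw [hmdef]
      apply Nat.lt_ceil.mpr
      have h2 : (2 : ℝ) * (((n'+1)/2 - 1 : ℕ) : ℝ) < (n' : ℝ) := by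
        exact_mod_cast Nat.cast_lt.mpr (by omega : 2 * ((n'+1)/2 - 1) < n')
      rw [lt_div_iff₀ (by norm_num : (0:ℝ) < 2)]
      linarith
    omega
  have hm1 : 1 ≤ m := by omega
  have hmn : m ≤ n' := by omega
  obtain ⟨j, hj⟩ := Finset.card_eq_one.mp hr
  have hrj : ∀ i, r i = 1 ↔ i = j := by
    intro i
    have h := Finset.ext_iff.mp hj i
    simpa using h
  have hsum : ∀ x : Fin n' → ZMod 2, (∑ i, r i * x i) = x j := by
    intro x
    rw [Finset.sum_eq_single j]
    · rw [(hrj j).mpr rfl, one_mul]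
    · intro i _ hi
      rcases zmod2_cases (r i) with h | h
      · rw [h, zero_mul]
      · exact absurd ((hrj i).mp h) hi
    · intro h
      exact absurd (Finset.mem_univ j) h
  have hA'mem : ∀ x : Fin n' → ZMod 2, x ∈ A' ↔ m ≤ (univ.filter fun i => x i = 1).card := by
    intro x
    rw [hA', Finset.mem_filter]
    simp only [Finset.mem_univ, true_and]
    exact ⟨fun h => Nat.ceil_le.mpr h, fun h => Nat.ceil_le.mp h⟩
  have hF : fourierF2 A' r
      = ∑ S ∈ (univ : Finset (Finset (Fin n'))).filter (fun S => m ≤ S.card),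
          (if j ∈ S then (-1:ℝ) else 1) := by
    unfold fourierF2
    refine Finset.sum_nbij' (fun x => univ.filter fun i => x i = 1)
      (fun S => fun i => if i ∈ S then (1 : ZMod 2) else 0) ?_ ?_ ?_ ?_ ?_
    · intro x hx
      rw [Finset.mem_filter]
      exact ⟨Finset.mem_univ _, (hA'mem x).mp hx⟩
    · intro S hS
      rw [Finset.mem_filter] at hS
      rw [hA'mem]
      have : (univ.filter fun i => (if i ∈ S then (1 : ZMod 2) else 0) = 1) = S := by
        ext i
        simp only [Finset.mem_filter, Finset.mem_univ, true_and]
        by_cases h : i ∈ S <;> simp [h]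
      rw [this]
      exact hS.2
    · intro x hx
      funext i
      rcases zmod2_cases (x i) with h | h
      · simp [h]
      · simp [h]
    · intro S hS
      ext i
      simp only [Finset.mem_filter, Finset.mem_univ, true_and]
      by_cases h : i ∈ S <;> simp [h]
    · intro x hx
      rw [hsum x]
      rcases zmod2_cases (x j) with h | h
      · rw [h]
        rw [if_neg]
        · simp
        · simp [Finset.mem_filter, h]
      · rw [h]
        rw [if_pos]
        · simp [ZMod.val_one]
        · simp [Finset.mem_filter, h]
  have hFval : fourierF2 A' r = -(((n'-1).choose (m-1) : ℕ) : ℝ) := by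
    rw [hF]
    exact sum_sign_sets n' m hm1 j
  have hRHS := rhs_sum n' m hm1 hmn
  constructor
  · rw [hRHS, hFval, abs_neg, Nat.abs_cast]
  · rw [hRHS]
    exact lb_main n' m hn' hm2
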